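/- The extended pentagon configuration has no realization with all coordinates rational: there is no assignment of 11 points in ℚ² realizing exactly the prescribed collinearities of the pentagon configuration (vertices, diagonal intersection points, and center of a pentagon). -/

import Mathlib

/-- The ten lines of the extended pentagon configuration 𝒞₁₁: points 0–4 are
the pentagon vertices, 5–9 the diagonal intersection points, 10 the center.
Five lines (the diagonals) contain four points each, and five lines (the
symmetry lines) contain three points each. -/
def pentagonLines : List (List (Fin 11)) :=
  [[0, 2, 5, 6], [0, 3, 8, 9], [0, 7, 10], [1, 3, 5, 7], [1, 4, 6, 9],
   [1, 8, 10], [2, 4, 7, 8], [2, 9, 10], [3, 6, 10], [4, 5, 10]]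

/-- Twice the signed area of the triangle `p q r`. -/
def det3 (p q r : ℚ × ℚ) : ℚ :=
  (q.1 - p.1) * (r.2 - p.2) - (q.2 - p.2) * (r.1 - p.1)

lemma collinear_iff_det3 (p q r : ℚ × ℚ) :
    Collinear ℚ ({p, q, r} : Set (ℚ × ℚ)) ↔ det3 p q r = 0 := by
  constructor
  · intro hc
    rw [collinear_iff_exists_forall_eq_smul_vadd] at hc
    obtain ⟨p₀, v, hv⟩ := hc
    obtain ⟨rp, hp⟩ := hv p (by simp)
    obtain ⟨rq, hq⟩ := hv q (by simp)
    obtain ⟨rr, hr⟩ := hv r (by simp)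
    rw [hp, hq, hr]
    simp only [det3, Prod.smul_fst, Prod.smul_snd, Prod.fst_vadd, Prod.snd_vadd,
      Prod.fst_add, Prod.snd_add, smul_eq_mul, vadd_eq_add]
    ring
  · intro hd
    obtain ⟨p1, p2⟩ := p
    obtain ⟨q1, q2⟩ := q
    obtain ⟨z1, z2⟩ := r
    simp only [det3] at hd
    by_cases hpq : (q1, q2) = (p1, p2)
    · rw [hpq]
      have hset : ({(p1, p2), (p1, p2), (z1, z2)} : Set (ℚ × ℚ)) =
          {(p1, p2), (z1, z2)} := by simp
      rw [hset]
      exact collinear_pair ℚ _ _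
    · rw [collinear_iff_exists_forall_eq_smul_vadd]
      refine ⟨(p1, p2), (q1 - p1, q2 - p2), ?_⟩
      intro z hz
      have hgen : ∀ t : ℚ, t • ((q1 : ℚ) - p1, (q2 : ℚ) - p2) +ᵥ ((p1 : ℚ), (p2 : ℚ))
          = (t * (q1 - p1) + p1, t * (q2 - p2) + p2) := by
        intro t
        simp [Prod.smul_mk, vadd_eq_add, Prod.mk_add_mk]
      rcases hz with hz | hz | hz
      · refine ⟨0, by rw [hz, hgen]; simp⟩
      · refine ⟨1, by rw [hz, hgen]; simp⟩
      · simp only [Set.mem_singleton_iff] at hz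
        by_cases h1 : q1 - p1 ≠ 0
        · refine ⟨(z1 - p1) / (q1 - p1), ?_⟩
          rw [hz, hgen, Prod.mk.injEq]
          constructor
          · field_simp; ring
          · rw [div_mul_eq_mul_div, div_add' _ _ _ h1, eq_comm, div_eq_iff h1]
            nlinarith [hd]
        · push_neg at h1
          have h4 : q2 - p2 ≠ 0 := by
            intro h3
            exact hpq (by rw [Prod.mk.injEq]; constructor <;> linarith)
          have h5 : z1 = p1 := by
            have h2 : (q2 - p2) * (z1 - p1) = 0 := by linear_combination -hd + (z2 - p2) * h1
            rcases mul_eq_zero.mp h2 with h | h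
            · exact absurd h h4
            · linarith
          refine ⟨(z2 - p2) / (q2 - p2), ?_⟩
          rw [hz, hgen, Prod.mk.injEq]
          constructor
          · rw [h1, h5]; ring
          · field_simp; ring

lemma sq_ne_five (q : ℚ) : q ^ 2 ≠ 5 := by
  intro h
  have h5 : Irrational (Real.sqrt 5) := by
    have hp : Nat.Prime 5 := by norm_num
    have := hp.irrational_sqrt
    simpa using this
  apply h5
  refine ⟨|q|, ?_⟩
  have hq : ((q : ℝ)) ^ 2 = 5 := by exact_mod_cast h
  rw [show (5 : ℝ) = (q : ℝ) ^ 2 from hq.symm, Real.sqrt_sq_eq_abs]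
  push_cast
  ring

/-- The algebraic core: the normalized incidence equations of the pentagon
configuration have no rational solution. -/
lemma pentagon_core (P2 P3 P4 P5 P6 P7 P8 P9 : ℚ × ℚ)
    (hm0 : det3 (0, 0) P7 (0, 1) = 0)
    (hm1 : det3 (1, 0) P8 (0, 1) = 0)
    (hm2 : det3 P2 P9 (0, 1) = 0)
    (hm3 : det3 P3 P6 (0, 1) = 0)
    (hm4 : det3 P4 P5 (0, 1) = 0)
    (hd1a : det3 (0, 0) P2 P5 = 0)
    (hd1b : det3 (0, 0) P2 P6 = 0)
    (hd2a : det3 (0, 0) P3 P8 = 0)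
    (hd2b : det3 (0, 0) P3 P9 = 0)
    (hd3a : det3 (1, 0) P3 P5 = 0)
    (hd3b : det3 (1, 0) P3 P7 = 0)
    (hd4a : det3 (1, 0) P4 P6 = 0)
    (hd4b : det3 (1, 0) P4 P9 = 0)
    (hd5a : det3 P2 P4 P7 = 0)
    (hd5b : det3 P2 P4 P8 = 0)
    (na : det3 (0, 0) P2 (0, 1) ≠ 0)
    (nb : det3 (0, 0) (1, 0) P2 ≠ 0)
    (nc : det3 (0, 0) P3 (0, 1) ≠ 0)
    (nd : det3 (0, 0) (1, 0) P3 ≠ 0)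
    (nK : det3 (1, 0) P2 P3 ≠ 0)
    (nk2 : det3 P2 P3 (0, 1) ≠ 0)
    (nk3 : det3 (1, 0) P3 (0, 1) ≠ 0) : False := by
  obtain ⟨a, b⟩ := P2
  obtain ⟨c, d⟩ := P3
  obtain ⟨e, f⟩ := P4
  obtain ⟨g, h⟩ := P5
  obtain ⟨i, j⟩ := P6
  obtain ⟨m, n⟩ := P7
  obtain ⟨o, r⟩ := P8
  obtain ⟨x, y⟩ := P9
  simp only [det3] at *
  -- basic nonvanishing facts
  have ha : a ≠ 0 := fun h' => na (by linear_combination h')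
  have hb : b ≠ 0 := fun h' => nb (by linear_combination h')
  have hc : c ≠ 0 := fun h' => nc (by linear_combination h')
  have hd : d ≠ 0 := fun h' => nd (by linear_combination h')
  have hK : a * d - d - b * c + b ≠ 0 := fun h' => nK (by linear_combination h')
  have h2310 : c - a - b * c + a * d ≠ 0 := fun h' => nk2 (by linear_combination h')
  have hcd1 : c + d - 1 ≠ 0 := fun h' => nk3 (by linear_combination h')
  -- solve for the auxiliary points
  have hm : m = 0 := by linear_combination hm0
  have hg : g * (a * d + b - b * c) = a * d := by
    linear_combination (c - 1) * hd1a - a * hd3a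
  have hh : h * (a * d + b - b * c) = b * d := by
    have habd : a * (h * (a * d + b - b * c)) = a * (b * d) := by
      linear_combination (a * d + b - b * c) * hd1a + b * hg
    exact mul_left_cancel₀ ha habd
  have hn : (c - 1) * n + d = 0 := by linear_combination hd3b + d * hm
  have hi : i * (a - a * d + b * c) = a * c := by
    linear_combination a * hm3 - c * hd1b
  have hj : j * (a - a * d + b * c) = b * c := by
    have habd : a * (j * (a - a * d + b * c)) = a * (b * c) := by
      linear_combination (a - a * d + b * c) * hd1b + b * hi
    exact mul_left_cancel₀ ha habd
  have hx : x * (c - b * c + a * d) = a * c := by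
    linear_combination c * hm2 - a * hd2b
  have hy : y * (c - b * c + a * d) = a * d := by
    have habd : c * (y * (c - b * c + a * d)) = c * (a * d) := by
      linear_combination (c - b * c + a * d) * hd2b + d * hx
    exact mul_left_cancel₀ hc habd
  have ho : o * (c + d) = c := by
    linear_combination c * hm1 - hd2a
  have hr : r * (c + d) = d := by
    linear_combination d * hm1 + hd2a
  -- the five incidence equations in a, b, c, d, e, f alone
  have eqA : (a * d - b * d - b * c + b) * e + (a * d) * f - a * d = 0 := by
    linear_combination (-(a * d + b - b * c)) * hm4 + (1 - f) * hg + e * hh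
  have eqB : (b * c) * e + (a - a * c - a * d + b * c) * f - b * c = 0 := by
    linear_combination (a - a * d + b * c) * hd4a - (e - 1) * hj + f * hi
  have eqC : (a * d) * e + (c - a * c + a * d - b * c) * f - a * d = 0 := by
    linear_combination (c - b * c + a * d) * hd4b - (e - 1) * hy + f * hx
  have eqD : (d - b + b * c) * e + (a - a * c) * f - a * d = 0 := by
    linear_combination (-(c - 1)) * hd5a + (e - a) * hn -
      ((f - b) * (c - 1)) * hm
  have eqE : (d - b * c - b * d) * e + (a * c + a * d - c) * f -
      (a * d - b * c) = 0 := by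
    linear_combination (c + d) * hd5b - (e - a) * hr + (f - b) * ho
  -- two determinant certificates eliminating e and f
  have hR : (c + d - 1) * (2 * b) *
      (b * c ^ 2 * (a + b - 1) - a ^ 2 * d * (c + d - 1)) = 0 := by
    linear_combination
      (-(-2 * b * c ^ 2 + 2 * b ^ 2 * c ^ 2 + 2 * a * b * c ^ 2 + 2 * a ^ 2 * d
          - 2 * a ^ 2 * d ^ 2 - 2 * a ^ 2 * c * d)) * eqA +
      (-((b * c - b * c * d - b * c ^ 2 - 2 * b ^ 2 * c + 2 * b ^ 2 * c * d
            + 2 * b ^ 2 * c ^ 2 + a * c * d - a * b + 3 * a * b * d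
            - 2 * a * b * d ^ 2 + a * b * c - 3 * a * b * c * d - a ^ 2 * d
            + a ^ 2 * d ^ 2) +
          (b * c - b * c * d - b * c ^ 2 + a * c * d + a * b - a * b * d
            - 3 * a * b * c + a * b * c * d + 2 * a * b * c ^ 2 + a ^ 2 * d
            - a ^ 2 * d ^ 2 - 2 * a ^ 2 * c * d))) * eqB +
      (-((b * c - b * c * d - b * c ^ 2 - 2 * b ^ 2 * c + 2 * b ^ 2 * c * d
            + 2 * b ^ 2 * c ^ 2 + a * c * d - a * b + 3 * a * b * d
            - 2 * a * b * d ^ 2 + a * b * c - 3 * a * b * c * d - a ^ 2 * d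
            + a ^ 2 * d ^ 2) -
          (b * c - b * c * d - b * c ^ 2 + a * c * d + a * b - a * b * d
            - 3 * a * b * c + a * b * c * d + 2 * a * b * c ^ 2 + a ^ 2 * d
            - a ^ 2 * d ^ 2 - 2 * a ^ 2 * c * d))) * eqC
  have hU : a * (a * d - d - b * c + b) *
      (b * c - b * c ^ 2 - c * d - a * d + a * d ^ 2 + 2 * a * c * d) = 0 := by
    linear_combination
      (-(c * d - b * c + b * c ^ 2 + a * d - 2 * a * c * d - a * b
          + 2 * a * b * c - a * b * c ^ 2 - a ^ 2 * d + a ^ 2 * c * d)) * eqA +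
      (-(-(b * c) + b * c * d + b * c ^ 2 - a * c * d - a * b + a * b * d
          + 3 * a * b * c - a * b * c * d - 2 * a * b * c ^ 2 - a ^ 2 * d
          + a ^ 2 * d ^ 2 + 2 * a ^ 2 * c * d)) * eqD +
      (-(-(a * d ^ 2) + a * b - 2 * a * b * c + a * b * c ^ 2 + a ^ 2 * d
          - a ^ 2 * c * d)) * eqB +
      (-(-(a * d ^ 2) + a * b - 2 * a * b * c + a * b * c ^ 2 + a ^ 2 * d
          - a ^ 2 * c * d)) * eqC
  have hR0 : b * c ^ 2 * (a + b - 1) - a ^ 2 * d * (c + d - 1) = 0 := by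
    have hnz : (c + d - 1) * (2 * b) ≠ 0 :=
      mul_ne_zero hcd1 (by simpa using hb)
    exact (mul_eq_zero.mp hR).resolve_left hnz
  have hU0 : b * c - b * c ^ 2 - c * d - a * d + a * d ^ 2 + 2 * a * c * d = 0 := by
    have hnz : a * (a * d - d - b * c + b) ≠ 0 := mul_ne_zero ha hK
    exact (mul_eq_zero.mp hU).resolve_left hnz
  -- golden-ratio contradiction: the cross-ratio on a diagonal would be φ²
  set NN : ℚ := d * (c - a - b * c + a * d) with hNN
  set DQ : ℚ := -(c * (a * d - d - b * c + b)) with hDQ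
  have hDQ0 : DQ ≠ 0 := neg_ne_zero.mpr (mul_ne_zero hc hK)
  have hfin : ((2 * NN - 3 * DQ) / DQ) ^ 2 = 5 := by
    rw [div_pow, div_eq_iff (pow_ne_zero 2 hDQ0)]
    rw [hNN, hDQ]
    linear_combination
      (4 * c * d + 4 * b * c - 8 * b * c * d - 4 * b * c ^ 2 - 8 * a * d
        + 8 * a * d ^ 2 + 4 * a * c * d) * hU0 +
      (-4 * d + 4 * d ^ 2 + 4 * c * d) * hR0
  exact sq_ne_five _ hfin

/-- The extended pentagon configuration has no realization with rational
coordinates: there is no injective assignment of 11 points of ℚ² such that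
three points are collinear exactly when the corresponding abstract triple lies
on one of the ten lines of the configuration. -/
theorem no_rational_pentagon_configuration :
    ¬ ∃ w : Fin 11 → ℚ × ℚ, Function.Injective w ∧
      ∀ i j k : Fin 11, i ≠ j → j ≠ k → i ≠ k →
        (Collinear ℚ ({w i, w j, w k} : Set (ℚ × ℚ)) ↔
          ∃ L ∈ pentagonLines, i ∈ L ∧ j ∈ L ∧ k ∈ L) := by
  rintro ⟨w, hinj, hcol⟩
  have hndeg : ∀ i j k : Fin 11, i ≠ j → j ≠ k → i ≠ k →
      ¬(∃ L ∈ pentagonLines, i ∈ L ∧ j ∈ L ∧ k ∈ L) →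
      det3 (w i) (w j) (w k) ≠ 0 := by
    intro i j k hij hjk hik hnl hdet
    exact hnl ((hcol i j k hij hjk hik).1 ((collinear_iff_det3 _ _ _).2 hdet))
  have hline : ∀ i j k : Fin 11, i ≠ j → j ≠ k → i ≠ k →
      (∃ L ∈ pentagonLines, i ∈ L ∧ j ∈ L ∧ k ∈ L) →
      det3 (w i) (w j) (w k) = 0 := by
    intro i j k hij hjk hik hl
    exact (collinear_iff_det3 _ _ _).1 ((hcol i j k hij hjk hik).2 hl)
  have hD : det3 (w 0) (w 1) (w 10) ≠ 0 :=
    hndeg 0 1 10 (by decide) (by decide) (by decide) (by decide)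
  set T : ℚ × ℚ → ℚ × ℚ :=
    fun p => (det3 (w 0) p (w 10) / det3 (w 0) (w 1) (w 10),
      det3 (w 0) (w 1) p / det3 (w 0) (w 1) (w 10)) with hTdef
  have hTdet : ∀ p q r : ℚ × ℚ,
      det3 (T p) (T q) (T r) = det3 p q r / det3 (w 0) (w 1) (w 10) := by
    intro p q r
    simp only [hTdef]
    unfold det3 at hD ⊢
    rw [eq_div_iff hD, div_sub_div_same, div_sub_div_same, div_sub_div_same, div_sub_div_same,
      div_mul_div_comm, div_mul_div_comm, div_sub_div_same, div_mul_eq_mul_div,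
      div_eq_iff (mul_ne_zero hD hD)]
    ring
  have hz1 : det3 (w 0) (w 0) (w 10) = 0 := by unfold det3; ring
  have hz2 : det3 (w 0) (w 1) (w 0) = 0 := by unfold det3; ring
  have hz3 : det3 (w 0) (w 1) (w 1) = 0 := by unfold det3; ring
  have hz4 : det3 (w 0) (w 10) (w 10) = 0 := by unfold det3; ring
  have hT0 : T (w 0) = (0, 0) := by
    simp only [hTdef, hz1, hz2, zero_div]
  have hT1 : T (w 1) = (1, 0) := by
    simp only [hTdef, hz3, zero_div, div_self hD]
  have hT10 : T (w 10) = (0, 1) := by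
    simp only [hTdef, hz4, zero_div, div_self hD]
  have hlin : ∀ i j k : Fin 11, i ≠ j → j ≠ k → i ≠ k →
      (∃ L ∈ pentagonLines, i ∈ L ∧ j ∈ L ∧ k ∈ L) →
      det3 (T (w i)) (T (w j)) (T (w k)) = 0 := by
    intro i j k hij hjk hik hl
    rw [hTdet, hline i j k hij hjk hik hl, zero_div]
  have hnz : ∀ i j k : Fin 11, i ≠ j → j ≠ k → i ≠ k →
      ¬(∃ L ∈ pentagonLines, i ∈ L ∧ j ∈ L ∧ k ∈ L) →
      det3 (T (w i)) (T (w j)) (T (w k)) ≠ 0 := by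
    intro i j k hij hjk hik hnl
    rw [hTdet]
    exact div_ne_zero (hndeg i j k hij hjk hik hnl) hD
  refine pentagon_core (T (w 2)) (T (w 3)) (T (w 4)) (T (w 5)) (T (w 6))
    (T (w 7)) (T (w 8)) (T (w 9)) ?_ ?_ ?_ ?_ ?_ ?_ ?_ ?_ ?_ ?_ ?_ ?_ ?_ ?_ ?_
    ?_ ?_ ?_ ?_ ?_ ?_ ?_
  · rw [← hT0, ← hT10]
    exact hlin 0 7 10 (by decide) (by decide) (by decide) (by decide)
  · rw [← hT1, ← hT10]
    exact hlin 1 8 10 (by decide) (by decide) (by decide) (by decide)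
  · rw [← hT10]
    exact hlin 2 9 10 (by decide) (by decide) (by decide) (by decide)
  · rw [← hT10]
    exact hlin 3 6 10 (by decide) (by decide) (by decide) (by decide)
  · rw [← hT10]
    exact hlin 4 5 10 (by decide) (by decide) (by decide) (by decide)
  · rw [← hT0]
    exact hlin 0 2 5 (by decide) (by decide) (by decide) (by decide)
  · rw [← hT0]
    exact hlin 0 2 6 (by decide) (by decide) (by decide) (by decide)
  · rw [← hT0]
    exact hlin 0 3 8 (by decide) (by decide) (by decide) (by decide)
  · rw [← hT0]
    exact hlin 0 3 9 (by decide) (by decide) (by decide) (by decide)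
  · rw [← hT1]
    exact hlin 1 3 5 (by decide) (by decide) (by decide) (by decide)
  · rw [← hT1]
    exact hlin 1 3 7 (by decide) (by decide) (by decide) (by decide)
  · rw [← hT1]
    exact hlin 1 4 6 (by decide) (by decide) (by decide) (by decide)
  · rw [← hT1]
    exact hlin 1 4 9 (by decide) (by decide) (by decide) (by decide)
  · exact hlin 2 4 7 (by decide) (by decide) (by decide) (by decide)
  · exact hlin 2 4 8 (by decide) (by decide) (by decide) (by decide)
  · rw [← hT0, ← hT10]
    exact hnz 0 2 10 (by decide) (by decide) (by decide) (by decide)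
  · rw [← hT0, ← hT1]
    exact hnz 0 1 2 (by decide) (by decide) (by decide) (by decide)
  · rw [← hT0, ← hT10]
    exact hnz 0 3 10 (by decide) (by decide) (by decide) (by decide)
  · rw [← hT0, ← hT1]
    exact hnz 0 1 3 (by decide) (by decide) (by decide) (by decide)
  · rw [← hT1]
    exact hnz 1 2 3 (by decide) (by decide) (by decide) (by decide)
  · rw [← hT10]
    exact hnz 2 3 10 (by decide) (by decide) (by decide) (by decide)
  · rw [← hT1, ← hT10]
    exact hnz 1 3 10 (by decide) (by decide) (by decide) (by decide)
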